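/- In symbolic model B, let a be initial conditions with i := n_max(0) < ∞ and (b_t) boundary conditions such that the blowup time T is finite, where T = t_bc + 2 if i = 0 and T = 2^{1−i} if i ≥ 1. Then: (i) any two weak solutions coincide at every lattice point (n,t) with t ≤ T; and (ii) there exist two weak solutions that differ at some lattice point with t > T. -/

import Mathlib

open Filter Topology

namespace SSRG

variable {X : Type*}

/-- Upward shift map `σ₊(a) = (a₂, a₃, …)`. -/
def sigPlus (a : ℕ → X) : ℕ → X := fun i => a (i + 1)

/-- Downward shift map `σ₋(a) = (0, a₁, a₂, …)`. -/
def sigMinus [Zero X] (a : ℕ → X) : ℕ → X := fun i =>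
  match i with
  | 0 => 0
  | j + 1 => a j

/-- Coupling map `ξ(a) = (f(a₁,a₂), g(a₁,a₂), 0, 0, …)`. -/
def xiMap [Zero X] (f g : X → X → X) (a : ℕ → X) : ℕ → X := fun i =>
  match i with
  | 0 => f (a 0) (a 1)
  | 1 => g (a 0) (a 1)
  | _ + 2 => 0

/-- Boundary coupling map `β_b(a) = (g(b,a₁), 0, 0, …)`. -/
def betaMap [Zero X] (g : X → X → X) (b : X) (a : ℕ → X) : ℕ → X := fun i =>
  match i with
  | 0 => g b (a 0)
  | _ + 1 => 0

/-- The renormalization group operator `R_g[ψ] = σ₋ ∘ ψ ∘ ψ ∘ σ₊ + ξ`. -/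
def RGop [AddCommMonoid X] (f g : X → X → X) (ψ : (ℕ → X) → (ℕ → X)) :
    (ℕ → X) → (ℕ → X) :=
  fun a => sigMinus (ψ (ψ (sigPlus a))) + xiMap f g a

/-- The ideal equation at scale `n ≥ 1` and time `t = m·2⁻ⁿ`, `m ≥ 1`.
A field `u : ℕ → ℕ → X` records `u n m = uₙ(m·τₙ)`; row `0` is the boundary row,
`u 0 t = b_t` at integer times `t`. -/
def IdealEq [AddCommMonoid X] (f g : X → X → X) (u : ℕ → ℕ → X) (n m : ℕ) : Prop :=
  if m % 2 = 1 then
    u n m = f (u n (m - 1)) (u (n + 1) (2 * (m - 1)))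
  else
    u n m = f (u n (m - 1)) (u (n + 1) (2 * (m - 1))) +
      g (u (n - 1) ((m - 2) / 2)) (u n (m - 2))

/-- The regularized solution at regularization scale number `N`, with initial
conditions `a` (so `uₙ(0) = aₙ = a (n-1)` for `1 ≤ n ≤ N`) and boundary conditions
`b` (`u₀(t) = b t`): all variables at scales `n > N` vanish and the ideal equations
hold for `1 ≤ n ≤ N`. -/
def IsRegSol [AddCommMonoid X] (f g : X → X → X) (N : ℕ) (a b : ℕ → X)
    (u : ℕ → ℕ → X) : Prop :=
  (∀ m, u 0 m = b m) ∧
  (∀ n, 1 ≤ n → n ≤ N → u n 0 = a (n - 1)) ∧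
  (∀ n, N < n → ∀ m, u n m = 0) ∧
  (∀ n m, 1 ≤ n → n ≤ N → 1 ≤ m → IdealEq f g u n m)

/-- The state `u(1/2) = (u₁(1/2), u₂(1/2), …)` of a field. -/
def halfState (u : ℕ → ℕ → X) : ℕ → X := fun i => u (i + 1) (2 ^ i)

/-- The state `u(1) = (u₁(1), u₂(1), …)` of a field. -/
def unitState (u : ℕ → ℕ → X) : ℕ → X := fun i => u (i + 1) (2 ^ (i + 1))

/-- The state `u(t) = (u₁(t), u₂(t), …)` of a field at an integer time `t`. -/
def intState (u : ℕ → ℕ → X) (t : ℕ) : ℕ → X := fun i => u (i + 1) (t * 2 ^ (i + 1))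

/-- A weak solution of the ideal system: initial conditions `a`, boundary
conditions `b`, and the ideal equations at all points of the lattice. -/
def IsWeakSol [AddCommMonoid X] (f g : X → X → X) (a b : ℕ → X) (u : ℕ → ℕ → X) : Prop :=
  (∀ m, u 0 m = b m) ∧
  (∀ n, 1 ≤ n → u n 0 = a (n - 1)) ∧
  (∀ n m, 1 ≤ n → 1 ≤ m → IdealEq f g u n m)

/-- Convergence of maps: `ψ N (a_N) → ψ∞ a` for every convergent sequence `a_N → a`
in `X^ℕ` with the product topology. -/
def MapConv [TopologicalSpace X] (ψ : ℕ → (ℕ → X) → (ℕ → X))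
    (ψinf : (ℕ → X) → (ℕ → X)) : Prop :=
  ∀ (aN : ℕ → ℕ → X) (a : ℕ → X), Tendsto aN atTop (𝓝 a) →
    Tendsto (fun N => ψ N (aN N)) atTop (𝓝 (ψinf a))

open ENNReal

/-- Interaction `f` of the symbolic model B:
`f(0,0) = f(0,1) = f(1,0) = 0`, `f(1,1) = 1`. -/
def fB : ZMod 2 → ZMod 2 → ZMod 2 := fun u v => u * v

/-- Interaction `g` of the symbolic model B:
`g(0,0) = g(1,1) = 0`, `g(0,1) = g(1,0) = 1`. -/
def gB : ZMod 2 → ZMod 2 → ZMod 2 := fun u v => u + v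

/-- The time `t_bc = sup{s ≥ 0 : b_j = 0 for all integers 0 ≤ j < s} ∈ [0,∞]` at
which the boundary condition becomes active. -/
noncomputable def tbc (b : ℕ → ZMod 2) : ℝ≥0∞ :=
  sSup {s : ℝ≥0∞ | ∀ j : ℕ, (j : ℝ≥0∞) < s → b j = 0}

/-! Engine -/

def sfun (N0 K n : ℕ) : ℕ := 2 ^ (n - N0) * K

structure Setup (a b : ℕ → ZMod 2) (N0 K : ℕ) : Prop where
  hK2 : 2 ≤ K
  hNK : N0 = 0 ∨ K = 2
  ha0 : ∀ j, N0 ≤ j → a j = 0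
  hb0 : ∀ j, N0 = 0 → j + 3 ≤ K → b j = 0

structure Good (a b : ℕ → ZMod 2) (N0 : ℕ) (N : ℕ) (u : ℕ → ℕ → ZMod 2) : Prop where
  row0 : ∀ m, u 0 m = b m
  init : ∀ n, 1 ≤ n → n ≤ N → u n 0 = a (n - 1)
  initz : ∀ n, N0 < n → u n 0 = 0
  ideal : ∀ n m, 1 ≤ n → n ≤ N → 1 ≤ m → IdealEq fB gB u n m

lemma two_val : ∀ x : ZMod 2, x = 0 ∨ x = 1 := by decide

lemma ideal_odd {u : ℕ → ℕ → ZMod 2} {n m : ℕ} (h : IdealEq fB gB u n m)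
    (hm : m % 2 = 1) : u n m = u n (m - 1) * u (n + 1) (2 * (m - 1)) := by
  unfold IdealEq at h; rw [if_pos hm] at h; exact h

lemma ideal_even {u : ℕ → ℕ → ZMod 2} {n m : ℕ} (h : IdealEq fB gB u n m)
    (hm : m % 2 = 0) :
    u n m = u n (m - 1) * u (n + 1) (2 * (m - 1)) +
      (u (n - 1) ((m - 2) / 2) + u n (m - 2)) := by
  unfold IdealEq at h; rw [if_neg (by omega)] at h; exact h

section Engine

variable {a b : ℕ → ZMod 2} {N0 K N : ℕ} {u : ℕ → ℕ → ZMod 2}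

lemma s_ge2 (st : Setup a b N0 K) (n : ℕ) : 2 ≤ sfun N0 K n :=
  le_trans st.hK2 (Nat.le_mul_of_pos_left K (Nat.pow_pos (by norm_num)))

lemma s_succ (hn : N0 ≤ n) : sfun N0 K (n + 1) = 2 * sfun N0 K n := by
  unfold sfun
  rw [show n + 1 - N0 = (n - N0) + 1 by omega, pow_succ]
  ring

lemma s_even (st : Setup a b N0 K) (hn : max 1 N0 ≤ n) : sfun N0 K n % 2 = 0 := by
  rcases st.hNK with h | h
  · subst h
    have h1 : 1 ≤ n := le_trans (le_max_left _ _) hn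
    have hd : 2 ∣ sfun 0 K n :=
      dvd_mul_of_dvd_left (dvd_pow_self 2 (by omega)) K
    omega
  · have hd : 2 ∣ sfun N0 K n := by
      unfold sfun; rw [h]; exact ⟨2 ^ (n - N0), by ring⟩
    omega

/-- Zero lemma (interior). -/
lemma lemA (st : Setup a b N0 K) (G : Good a b N0 N u) :
    ∀ n, max 1 N0 ≤ n → n ≤ N → ∀ m, 1 ≤ m → m + 3 ≤ sfun N0 K n → u n m = 0 := by
  intro n
  induction n using Nat.strong_induction_on with
  | _ n IHn =>
    intro hn hnN m
    induction m using Nat.strong_induction_on with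
    | _ m IHm =>
      intro hm1 hmS
      have hn1 : 1 ≤ n := le_trans (le_max_left _ _) hn
      have hnN0 : N0 ≤ n := le_trans (le_max_right _ _) hn
      have hEq := G.ideal n m hn1 hnN hm1
      -- n must exceed N0 whenever m ≥ 2 (in fact whenever m+3 ≤ s n for m ≥ 2)
      have hgtN0 : 2 ≤ m → N0 < n := by
        intro hm2
        rcases st.hNK with h | h
        · omega
        · by_contra hc
          have hnn : n = N0 := by omega
          have : sfun N0 K n = 2 := by
            unfold sfun; rw [hnn, Nat.sub_self, pow_zero, one_mul, h]
          omega
      rcases Nat.mod_two_eq_zero_or_one m with hpar | hpar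
      · -- even, m ≥ 2
        have hm2 : 2 ≤ m := by omega
        have hE := ideal_even hEq hpar
        have h1 : u n (m - 1) = 0 := IHm (m - 1) (by omega) (by omega) (by omega)
        have h3 : u n (m - 2) = 0 := by
          rcases Nat.lt_or_ge m 4 with h4 | h4
          · have : m = 2 := by omega
            rw [this]
            exact G.initz n (by
              have h5 : 5 ≤ sfun N0 K n := by omega
              exact hgtN0 hm2)
          · exact IHm (m - 2) (by omega) (by omega) (by omega)
        have h2 : u (n - 1) ((m - 2) / 2) = 0 := by
          set j := (m - 2) / 2 with hj
          have hjm : m = 2 * j + 2 := by omega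
          rcases Nat.eq_or_lt_of_le hn1 with h1' | h1'
          · -- n = 1
            have hN00 : N0 = 0 := by have := hgtN0 hm2; omega
            have hb : u 0 j = b j := G.row0 j
            have hs1 : sfun N0 K 1 = 2 * K := by
              unfold sfun; rw [hN00]; norm_num
            rw [← h1']
            simp only [Nat.sub_self]
            rw [hb]
            exact st.hb0 j hN00 (by rw [← h1'] at hmS; omega)
          · -- n ≥ 2
            have hn2 : 2 ≤ n := h1'
            have hNn1 : N0 < n := hgtN0 hm2
            rcases Nat.eq_zero_or_pos j with hj0 | hj1
            · rw [hj0]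
              refine G.initz (n - 1) ?_
              -- need N0 < n - 1, from m = 2 → 5 ≤ s n and n-1 = N0 → contradiction
              by_contra hc
              have hnn : n = N0 + 1 := by omega
              have hK2' : K = 2 := by
                rcases st.hNK with h | h
                · omega
                · exact h
              have : sfun N0 K n = 4 := by
                unfold sfun
                rw [hnn, show N0 + 1 - N0 = 1 by omega, hK2']
                norm_num
              omega
            · have hss : sfun N0 K n = 2 * sfun N0 K (n - 1) := by
                have := s_succ (K := K) (n := n - 1) (show N0 ≤ n - 1 by omega)
                rw [show n - 1 + 1 = n by omega] at this
                exact this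
              exact IHn (n - 1) (by omega) (max_le (by omega) (by omega)) (by omega) j hj1
                (by omega)
        rw [hE, h1, h2, h3]
        ring
      · -- odd
        have hE := ideal_odd hEq hpar
        rcases Nat.eq_or_lt_of_le hm1 with h1' | h1'
        · -- m = 1
          have h2 : u (n + 1) 0 = 0 := G.initz (n + 1) (by omega)
          rw [← h1'] at hE ⊢
          simpa [h2] using hE
        · -- m ≥ 3
          have h1 : u n (m - 1) = 0 := IHm (m - 1) (by omega) (by omega) (by omega)
          rw [hE, h1, zero_mul]


/-- Zero lemma (odd points up to the front). -/
lemma lemA' (st : Setup a b N0 K) (G : Good a b N0 N u)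
    (h4 : u (N + 1) (sfun N0 K (N + 1) - 4) = 0) :
    ∀ n, max 1 N0 ≤ n → n ≤ N → ∀ m, m % 2 = 1 → m + 1 ≤ sfun N0 K n → u n m = 0 := by
  intro n hn hnN m hodd hm
  have hn1 : 1 ≤ n := le_trans (le_max_left _ _) hn
  have hnN0 : N0 ≤ n := le_trans (le_max_right _ _) hn
  have hs2 := s_ge2 st n
  have hse := s_even (a := a) (b := b) st hn
  have hm1 : 1 ≤ m := by omega
  by_cases hc : m + 3 ≤ sfun N0 K n
  · exact lemA st G n hn hnN m hm1 hc
  · have hmeq : m = sfun N0 K n - 1 := by omega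
    have hEq := ideal_odd (G.ideal n m hn1 hnN hm1) hodd
    have hss : sfun N0 K (n + 1) = 2 * sfun N0 K n :=
      s_succ (le_trans (le_max_right _ _) hn)
    have hfac : u (n + 1) (2 * (m - 1)) = 0 := by
      by_cases hz : 2 * (m - 1) = 0
      · rw [hz]; exact G.initz (n + 1) (by omega)
      · rcases Nat.lt_or_ge n N with hlt | hge
        · exact lemA st G (n + 1) (max_le (by omega) (by omega)) (by omega)
            (2 * (m - 1)) (by omega) (by omega)
        · have h' : n = N := by omega
          subst h'
          have hidx : 2 * (m - 1) = sfun N0 K (n + 1) - 4 := by omega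
          rw [hidx]
          exact h4
    rw [hEq, hfac, mul_zero]

/-- Front lemma: the front value is `1`. -/
lemma lemFront (st : Setup a b N0 K) (G : Good a b N0 N u)
    (h4 : u (N + 1) (sfun N0 K (N + 1) - 4) = 0)
    (hf1 : 1 ≤ N0 → a (N0 - 1) = 1) (hf0 : N0 = 0 → b (K - 2) = 1) :
    ∀ n, max 1 N0 ≤ n → n ≤ N → u n (sfun N0 K n - 2) = 1 := by
  intro n hn
  induction n, hn using Nat.le_induction with
  | base =>
    intro hnN
    rcases Nat.eq_zero_or_pos N0 with h0 | h0
    · -- N0 = 0, base row is 1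
      subst h0
      have hL : (max 1 0 : ℕ) = 1 := by simp
      rw [hL] at hnN ⊢
      have hs1 : sfun 0 K 1 = 2 * K := by unfold sfun; rw [pow_one]
      have hK2 := st.hK2
      set m := sfun 0 K 1 - 2 with hm
      have hmv : m = 2 * K - 2 := by omega
      have hE := ideal_even (G.ideal 1 m le_rfl hnN (by omega)) (by omega)
      have h1 : u 1 (m - 1) = 0 :=
        lemA' st G h4 1 (by simp) hnN (m - 1) (by omega) (by omega)
      have hj : (m - 2) / 2 = K - 2 := by omega
      have h2 : u 0 ((m - 2) / 2) = 1 := by rw [hj, G.row0]; exact hf0 rfl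
      have h3 : u 1 (m - 2) = 0 := by
        rcases Nat.eq_or_lt_of_le hK2 with h2' | h2'
        · rw [show m - 2 = 0 by omega]
          exact G.initz 1 (by omega)
        · exact lemA st G 1 (by simp) hnN (m - 2) (by omega) (by omega)
      rw [hE, h1, h2, h3, zero_mul, zero_add, add_zero]
    · -- N0 ≥ 1 : base is the seed a (N0 - 1) = 1
      have hL : max 1 N0 = N0 := by omega
      rw [hL] at hnN ⊢
      have hK2 : K = 2 := st.hNK.resolve_left (by omega)
      have hsv : sfun N0 K N0 = 2 := by
        unfold sfun; rw [Nat.sub_self, pow_zero, one_mul, hK2]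
      rw [hsv, show (2 : ℕ) - 2 = 0 from rfl, G.init N0 h0 hnN]
      exact hf1 h0
  | succ n hn IH =>
    intro hsN
    have hnN : n ≤ N := by omega
    have hIH := IH hnN
    have hn1 : 1 ≤ n := le_trans (le_max_left _ _) hn
    have hnN0 : N0 ≤ n := le_trans (le_max_right _ _) hn
    have hS2 := s_ge2 st n
    have hSe := s_even (a := a) (b := b) st hn
    have hss : sfun N0 K (n + 1) = 2 * sfun N0 K n := s_succ hnN0
    set m := sfun N0 K (n + 1) - 2 with hm
    have hE := ideal_even (G.ideal (n + 1) m (by omega) hsN (by omega)) (by omega)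
    have h1 : u (n + 1) (m - 1) = 0 :=
      lemA' st G h4 (n + 1) (max_le (by omega) (by omega)) hsN (m - 1) (by omega) (by omega)
    have hj : (m - 2) / 2 = sfun N0 K n - 2 := by omega
    have h2 : u (n + 1 - 1) ((m - 2) / 2) = 1 := by
      rw [hj, show n + 1 - 1 = n from rfl]; exact hIH
    have h3 : u (n + 1) (m - 2) = 0 := by
      rcases Nat.eq_or_lt_of_le hS2 with h2' | h2'
      · rw [show m - 2 = 0 by omega]
        exact G.initz (n + 1) (by omega)
      · exact lemA st G (n + 1) (max_le (by omega) (by omega)) hsN (m - 2)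
          (by omega) (by omega)
    rw [hE, h1, h2, h3, zero_mul, zero_add, add_zero]

/-- Post-front value at time exactly `T` is `1` (one row above the seed and higher). -/
lemma lemL4 (st : Setup a b N0 K) (G : Good a b N0 N u)
    (h4 : u (N + 1) (sfun N0 K (N + 1) - 4) = 0)
    (hf1 : 1 ≤ N0 → a (N0 - 1) = 1) (hf0 : N0 = 0 → b (K - 2) = 1) :
    ∀ n, max 1 N0 + 1 ≤ n → n ≤ N → u n (sfun N0 K n) = 1 := by
  intro n hn hnN
  have hn1 : 1 ≤ n := by omega
  have hmax : max 1 N0 ≤ n - 1 := by omega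
  have hnN0 : N0 ≤ n - 1 := le_trans (le_max_right _ _) hmax
  have hS2 := s_ge2 st (n - 1)
  have hSe := s_even (a := a) (b := b) (n := n) st (max_le (by omega) (by omega))
  have hSe' := s_even (a := a) (b := b) st hmax
  have hss : sfun N0 K n = 2 * sfun N0 K (n - 1) := by
    have := s_succ (K := K) (n := n - 1) hnN0
    rw [show n - 1 + 1 = n by omega] at this
    exact this
  set m := sfun N0 K n with hm
  have hE := ideal_even (G.ideal n m hn1 hnN (by omega)) (by omega)
  have h1 : u n (m - 1) = 0 :=
    lemA' st G h4 n (by omega) hnN (m - 1) (by omega) (by omega)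
  have hj : (m - 2) / 2 = sfun N0 K (n - 1) - 1 := by omega
  have h2 : u (n - 1) ((m - 2) / 2) = 0 := by
    rw [hj]
    have hb1 : n - 1 ≤ N := by omega
    have hb2 : (sfun N0 K (n - 1) - 1) % 2 = 1 := by omega
    have hb3 : (sfun N0 K (n - 1) - 1) + 1 ≤ sfun N0 K (n - 1) := by omega
    exact lemA' st G h4 (n - 1) hmax hb1 _ hb2 hb3
  have h3 : u n (m - 2) = 1 := lemFront st G h4 hf1 hf0 n (by omega) hnN
  rw [hE, h1, h2, h3, zero_mul, zero_add, zero_add]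

/-- Wake identity. -/
lemma lemWake (st : Setup a b N0 K) (G : Good a b N0 N u)
    (h4 : u (N + 1) (sfun N0 K (N + 1) - 4) = 0)
    (hf1 : 1 ≤ N0 → a (N0 - 1) = 1) (hf0 : N0 = 0 → b (K - 2) = 1) :
    ∀ n, max 1 N0 + 1 ≤ n → n ≤ N →
      u n (sfun N0 K n + 1) = u (n + 1) (sfun N0 K (n + 1)) := by
  intro n hn hnN
  have hn1 : 1 ≤ n := by omega
  have hnN0 : N0 ≤ n := by omega
  have hS2 := s_ge2 st n
  have hSe := s_even (a := a) (b := b) (n := n) st (max_le (by omega) (by omega))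
  have hss : sfun N0 K (n + 1) = 2 * sfun N0 K n := s_succ hnN0
  have hE := ideal_odd (G.ideal n (sfun N0 K n + 1) hn1 hnN (by omega)) (by omega)
  rw [show sfun N0 K n + 1 - 1 = sfun N0 K n from rfl] at hE
  rw [show 2 * sfun N0 K n = sfun N0 K (n + 1) by omega] at hE
  rw [hE, lemL4 st G h4 hf1 hf0 n hn hnN, one_mul]

/-- The descending ray: transports the product of the two top values down
to the fixed row `max 1 N0 + 2`. -/
lemma lemX (st : Setup a b N0 K) (G : Good a b N0 N u)
    (h4 : u (N + 1) (sfun N0 K (N + 1) - 4) = 0)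
    (hf1 : 1 ≤ N0 → a (N0 - 1) = 1) (hf0 : N0 = 0 → b (K - 2) = 1)
    (hN : max 1 N0 + 2 ≤ N) :
    u (max 1 N0 + 2) (sfun N0 K (max 1 N0 + 2) + 2)
      = u (N + 1) (sfun N0 K (N + 1)) * u (N + 1) (sfun N0 K (N + 1) + 2) := by
  have step : ∀ p, max 1 N0 + 2 ≤ p → p ≤ N →
      u p (sfun N0 K p + 2)
        = u p (sfun N0 K p + 1) * u (p + 1) (sfun N0 K (p + 1) + 2) := by
    intro p hp hpN
    have hp1 : 1 ≤ p := by omega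
    have hpN0 : N0 ≤ p := by omega
    have hS2 := s_ge2 st p
    have hSe := s_even (a := a) (b := b) (n := p) st (max_le (by omega) (by omega))
    have hss : sfun N0 K (p + 1) = 2 * sfun N0 K p := s_succ hpN0
    have hss2 : sfun N0 K p = 2 * sfun N0 K (p - 1) := by
      have hppN0 : N0 ≤ p - 1 := by omega
      have := s_succ (K := K) (n := p - 1) hppN0
      rw [show p - 1 + 1 = p by omega] at this
      exact this
    have hE := ideal_even (G.ideal p (sfun N0 K p + 2) hp1 hpN (by omega)) (by omega)
    rw [show sfun N0 K p + 2 - 1 = sfun N0 K p + 1 from rfl] at hE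
    rw [show 2 * (sfun N0 K p + 1) = sfun N0 K (p + 1) + 2 by omega] at hE
    rw [show (sfun N0 K p + 2 - 2) / 2 = sfun N0 K (p - 1) by omega] at hE
    rw [show sfun N0 K p + 2 - 2 = sfun N0 K p from rfl] at hE
    have hg1 : u (p - 1) (sfun N0 K (p - 1)) = 1 :=
      lemL4 st G h4 hf1 hf0 (p - 1) (by omega) (by omega)
    have hg2 : u p (sfun N0 K p) = 1 := lemL4 st G h4 hf1 hf0 p (by omega) hpN
    have h11 : (1 : ZMod 2) + 1 = 0 := by decide
    rw [hE, hg1, hg2, h11, add_zero]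
  have chain : ∀ d p, p = N - d → max 1 N0 + 2 ≤ p →
      u p (sfun N0 K p + 2)
        = u (N + 1) (sfun N0 K (N + 1)) * u (N + 1) (sfun N0 K (N + 1) + 2) := by
    intro d
    induction d with
    | zero =>
      intro p hpd hp
      have hpN : p = N := by omega
      subst hpN
      rw [step p hp le_rfl, lemWake st G h4 hf1 hf0 p (by omega) le_rfl]
    | succ d ih =>
      intro p hpd hp
      have hplt : p < N := by omega
      rw [step p hp (by omega)]
      have hw : u p (sfun N0 K p + 1) = u (p + 1) (sfun N0 K (p + 1)) :=
        lemWake st G h4 hf1 hf0 p (by omega) (by omega)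
      have hw1 : u (p + 1) (sfun N0 K (p + 1)) = 1 :=
        lemL4 st G h4 hf1 hf0 (p + 1) (by omega) (by omega)
      rw [hw, hw1, one_mul]
      exact ih (p + 1) (by omega) (by omega)
  have hfin : max 1 N0 + 2 = N - (N - (max 1 N0 + 2)) := by omega
  exact chain (N - (max 1 N0 + 2)) _ hfin le_rfl

lemma h4w (st : Setup a b N0 K) (G : ∀ N', Good a b N0 N' u) (N : ℕ)
    (hNb : max 1 N0 ≤ N) : u (N + 1) (sfun N0 K (N + 1) - 4) = 0 := by
  have hNN0 : N0 ≤ N := le_trans (le_max_right _ _) hNb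
  have hss : sfun N0 K (N + 1) = 2 * sfun N0 K N := s_succ hNN0
  have hs2 := s_ge2 st N
  by_cases h : sfun N0 K N = 2
  · rw [show sfun N0 K (N + 1) - 4 = 0 by omega]
    exact (G (N + 1)).initz (N + 1) (by omega)
  · exact lemA st (G (N + 1)) (N + 1) (max_le (by omega) (by omega)) le_rfl _
      (by omega) (by omega)

lemma lemA'w (st : Setup a b N0 K) (G : ∀ N', Good a b N0 N' u) :
    ∀ n, max 1 N0 ≤ n → ∀ m, m % 2 = 1 → m + 1 ≤ sfun N0 K n → u n m = 0 :=
  fun n hn m h1 h2 => lemA' st (G n) (h4w st G n hn) n hn le_rfl m h1 h2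

/-- Uniqueness on `t ≤ T`. -/
lemma uniq (st : Setup a b N0 K) {u v : ℕ → ℕ → ZMod 2}
    (Gu : ∀ N', Good a b N0 N' u) (Gv : ∀ N', Good a b N0 N' v) :
    ∀ n, 1 ≤ n → ∀ m, m * 2 ^ N0 ≤ K * 2 ^ n → u n m = v n m := by
  intro n
  induction n using Nat.strong_induction_on with
  | _ n IHn =>
    intro hn1 m
    induction m using Nat.strong_induction_on with
    | _ m IHm =>
      intro hreg
      rcases Nat.lt_or_ge m 2 with hm2 | hm2
      · rcases Nat.lt_or_ge m 1 with hm1 | hm1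
        · -- m = 0
          have hm0 : m = 0 := by omega
          subst hm0
          rw [(Gu n).init n hn1 le_rfl, (Gv n).init n hn1 le_rfl]
        · -- m = 1
          have hm1' : m = 1 := by omega
          subst hm1'
          have hEu := ideal_odd ((Gu n).ideal n 1 hn1 le_rfl le_rfl) (by norm_num)
          have hEv := ideal_odd ((Gv n).ideal n 1 hn1 le_rfl le_rfl) (by norm_num)
          rw [hEu, hEv, (Gu n).init n hn1 le_rfl, (Gv n).init n hn1 le_rfl,
            (Gu (n + 1)).init (n + 1) (by omega) le_rfl,
            (Gv (n + 1)).init (n + 1) (by omega) le_rfl]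
      · -- m ≥ 2
        have hnL : max 1 N0 ≤ n := by
          rcases st.hNK with h | h
          · omega
          · subst h
            have hp : 2 ^ (N0 + 1) ≤ 2 ^ (n + 1) := by
              calc 2 ^ (N0 + 1) = 2 * 2 ^ N0 := by rw [pow_succ]; ring
              _ ≤ m * 2 ^ N0 := Nat.mul_le_mul_right _ hm2
              _ ≤ 2 * 2 ^ n := hreg
              _ = 2 ^ (n + 1) := by rw [pow_succ]; ring
            have := (Nat.pow_le_pow_iff_right (by norm_num : 1 < 2)).mp hp
            omega
        have hnN0 : N0 ≤ n := le_trans (le_max_right _ _) hnL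
        have hms : m ≤ sfun N0 K n := by
          have hKs : K * 2 ^ n = sfun N0 K n * 2 ^ N0 := by
            unfold sfun
            rw [mul_comm (2 ^ (n - N0)) K, mul_assoc, ← pow_add,
              Nat.sub_add_cancel hnN0]
          rw [hKs] at hreg
          exact Nat.le_of_mul_le_mul_right hreg (Nat.pow_pos (by norm_num))
        have hs2 := s_ge2 st n
        have hse := s_even (a := a) (b := b) (n := n) st hnL
        have hss : sfun N0 K (n + 1) = 2 * sfun N0 K n := s_succ hnN0
        rcases Nat.mod_two_eq_zero_or_one m with hpar | hpar
        · -- even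
          have hEu := ideal_even ((Gu n).ideal n m hn1 le_rfl (by omega)) hpar
          have hEv := ideal_even ((Gv n).ideal n m hn1 le_rfl (by omega)) hpar
          have h1u : u n (m - 1) = 0 := lemA'w st Gu n hnL (m - 1) (by omega) (by omega)
          have h1v : v n (m - 1) = 0 := lemA'w st Gv n hnL (m - 1) (by omega) (by omega)
          have h2 : u n (m - 2) = v n (m - 2) :=
            IHm (m - 2) (by omega)
              (le_trans (Nat.mul_le_mul_right _ (by omega)) hreg)
          have h3 : u (n - 1) ((m - 2) / 2) = v (n - 1) ((m - 2) / 2) := by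
            rcases Nat.eq_or_lt_of_le hn1 with h1' | h1'
            · rw [← h1']
              simp only [Nat.sub_self]
              rw [(Gu n).row0, (Gv n).row0]
            · -- n ≥ 2
              have hj : (m - 2) / 2 * 2 ^ N0 ≤ K * 2 ^ (n - 1) := by
                have e1 : K * 2 ^ n = 2 * (K * 2 ^ (n - 1)) := by
                  have : (2 : ℕ) ^ n = 2 ^ (n - 1) * 2 := by
                    rw [← pow_succ]
                    congr 1
                    omega
                  rw [this]
                  ring
                have e2 : 2 * ((m - 2) / 2 * 2 ^ N0) ≤ m * 2 ^ N0 := by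
                  have : 2 * ((m - 2) / 2) ≤ m := by omega
                  calc 2 * ((m - 2) / 2 * 2 ^ N0) = 2 * ((m - 2) / 2) * 2 ^ N0 := by ring
                  _ ≤ m * 2 ^ N0 := Nat.mul_le_mul_right _ this
                have := le_trans e2 hreg
                rw [e1] at this
                omega
              exact IHn (n - 1) (by omega) (by omega) ((m - 2) / 2) hj
          rw [hEu, hEv, h1u, h1v, h2, h3, zero_mul, zero_mul]
        · -- odd, m ≥ 3
          have hfac : ∀ w : ℕ → ℕ → ZMod 2, (∀ N', Good a b N0 N' w) →
              w (n + 1) (2 * (m - 1)) = 0 := by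
            intro w Gw
            exact lemA st (Gw (n + 1)) (n + 1) (max_le (by omega) (by omega)) le_rfl
              (2 * (m - 1)) (by omega) (by omega)
          rw [ideal_odd ((Gu n).ideal n m hn1 le_rfl (by omega)) hpar, hfac u Gu,
            mul_zero,
            ideal_odd ((Gv n).ideal n m hn1 le_rfl (by omega)) hpar, hfac v Gv,
            mul_zero]

end Engine


/-! ### Regularized fields -/

def reg (top : ℕ → ℕ → ZMod 2) (N : ℕ) (a b : ℕ → ZMod 2) (n m : ℕ) : ZMod 2 :=
  if hn : n = 0 then b m
  else if hN : N < n then top n m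
  else if hm : m = 0 then a (n - 1)
  else
    (reg top N a b n (m - 1)) *
      (if hs : n + 1 ≤ N then reg top N a b (n + 1) (2 * (m - 1))
       else top (n + 1) (2 * (m - 1)))
    + (if m % 2 = 1 then 0 else
        (if hn1 : n - 1 = 0 then b ((m - 2) / 2)
         else reg top N a b (n - 1) ((m - 2) / 2))
        + reg top N a b n (m - 2))
termination_by m * 2 ^ (N - n)
decreasing_by
  · have hp : 0 < 2 ^ (N - n) := Nat.pow_pos (by norm_num)
    exact (Nat.mul_lt_mul_right hp).mpr (by omega)
  · have he : (2 : ℕ) ^ (N - n) = 2 ^ (N - (n + 1)) * 2 := by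
      rw [← pow_succ]
      congr 1
      omega
    calc 2 * (m - 1) * 2 ^ (N - (n + 1)) = (m - 1) * (2 ^ (N - (n + 1)) * 2) := by ring
    _ < m * (2 ^ (N - (n + 1)) * 2) := (Nat.mul_lt_mul_right (by positivity)).mpr (by omega)
    _ = m * 2 ^ (N - n) := by rw [he]
  · have he : (2 : ℕ) ^ (N - (n - 1)) = 2 ^ (N - n) * 2 := by
      rw [← pow_succ]
      congr 1
      omega
    have hp : 0 < 2 ^ (N - n) := Nat.pow_pos (by norm_num)
    calc (m - 2) / 2 * 2 ^ (N - (n - 1)) = (m - 2) / 2 * 2 * 2 ^ (N - n) := by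
          rw [he]; ring
    _ < m * 2 ^ (N - n) := (Nat.mul_lt_mul_right hp).mpr (by omega)
  · have hp : 0 < 2 ^ (N - n) := Nat.pow_pos (by norm_num)
    exact (Nat.mul_lt_mul_right hp).mpr (by omega)

section RegPart

variable {top : ℕ → ℕ → ZMod 2} {N : ℕ} {a b : ℕ → ZMod 2} {N0 K : ℕ}

lemma reg_row0 (m : ℕ) : reg top N a b 0 m = b m := by
  rw [reg, dif_pos rfl]

lemma reg_gt {n : ℕ} (h1 : 1 ≤ n) (h : N < n) (m : ℕ) :
    reg top N a b n m = top n m := by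
  rw [reg, dif_neg (by omega), dif_pos h]

lemma reg_init {n : ℕ} (h1 : 1 ≤ n) (h2 : n ≤ N) : reg top N a b n 0 = a (n - 1) := by
  rw [reg, dif_neg (by omega), dif_neg (by omega), dif_pos rfl]

lemma reg_ideal {n m : ℕ} (h1 : 1 ≤ n) (h2 : n ≤ N) (hm : 1 ≤ m) :
    IdealEq fB gB (reg top N a b) n m := by
  have hup : (if _ : n + 1 ≤ N then reg top N a b (n + 1) (2 * (m - 1))
      else top (n + 1) (2 * (m - 1))) = reg top N a b (n + 1) (2 * (m - 1)) := by
    split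
    · rfl
    · rw [reg_gt (by omega) (by omega)]
  have hdn : (if _ : n - 1 = 0 then b ((m - 2) / 2)
      else reg top N a b (n - 1) ((m - 2) / 2)) = reg top N a b (n - 1) ((m - 2) / 2) := by
    split
    · rename_i h
      rw [h, reg_row0]
    · rfl
  unfold IdealEq
  rcases Nat.mod_two_eq_zero_or_one m with hpar | hpar
  · rw [if_neg (by omega)]
    conv_lhs => rw [reg, dif_neg (by omega), dif_neg (by omega), dif_neg (by omega)]
    rw [hup, hdn, if_neg (by omega)]
    rfl
  · rw [if_pos hpar]
    conv_lhs => rw [reg, dif_neg (by omega), dif_neg (by omega), dif_neg (by omega)]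
    rw [hup, if_pos hpar, add_zero]
    rfl

lemma reg_good (st : Setup a b N0 K) (htop0 : ∀ n, N < n → top n 0 = 0) :
    Good a b N0 N (reg top N a b) where
  row0 := reg_row0
  init := fun _ h1 h2 => reg_init h1 h2
  initz := fun n hn => by
    rcases Nat.lt_or_ge N n with h | h
    · rw [reg_gt (by omega) h]
      exact htop0 n h
    · rw [reg_init (by omega) h]
      exact st.ha0 (n - 1) (by omega)
  ideal := fun _ _ h1 h2 hm => reg_ideal h1 h2 hm

/-- The "incoming ray at time `T`" top boundary condition. -/
def topB (N0 K : ℕ) : ℕ → ℕ → ZMod 2 := fun n m =>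
  if m = sfun N0 K n ∨ m = sfun N0 K n + 2 then 1 else 0

lemma sNp1_ge8 (st : Setup a b N0 K) (hN : max 1 N0 + 2 ≤ N) :
    8 ≤ sfun N0 K (N + 1) ∧ sfun N0 K (N + 1) = 2 * sfun N0 K N := by
  have h0 : N0 ≤ N - 1 := by omega
  have e2' := s_succ (K := K) (n := N - 1) h0
  have e2 : sfun N0 K N = 2 * sfun N0 K (N - 1) := by
    rw [show N - 1 + 1 = N by omega] at e2'
    exact e2'
  have e1 : sfun N0 K (N + 1) = 2 * sfun N0 K N := s_succ (by omega)
  have e3 := s_ge2 st (N - 1)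
  exact ⟨by omega, e1⟩

lemma family_A (st : Setup a b N0 K)
    (hf1 : 1 ≤ N0 → a (N0 - 1) = 1) (hf0 : N0 = 0 → b (K - 2) = 1)
    (hN : max 1 N0 + 2 ≤ N) :
    reg (fun _ _ => 0) N a b (max 1 N0 + 2) (sfun N0 K (max 1 N0 + 2) + 2) = 0 := by
  have G := reg_good (top := fun _ _ => (0 : ZMod 2)) (N := N) st (fun _ _ => rfl)
  have h4 : reg (fun _ _ => (0 : ZMod 2)) N a b (N + 1) (sfun N0 K (N + 1) - 4) = 0 := by
    rw [reg_gt (by omega) (by omega)]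
  rw [lemX st G h4 hf1 hf0 hN, reg_gt (by omega) (by omega), zero_mul]

lemma family_B (st : Setup a b N0 K)
    (hf1 : 1 ≤ N0 → a (N0 - 1) = 1) (hf0 : N0 = 0 → b (K - 2) = 1)
    (hN : max 1 N0 + 2 ≤ N) :
    reg (topB N0 K) N a b (max 1 N0 + 2) (sfun N0 K (max 1 N0 + 2) + 2) = 1 := by
  obtain ⟨hs8, hs2⟩ := sNp1_ge8 st hN
  have htop0 : ∀ n, N < n → topB N0 K n 0 = 0 := by
    intro n hn
    unfold topB
    have := s_ge2 st n
    rw [if_neg (by omega)]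
  have G := reg_good (top := topB N0 K) st htop0
  have h4 : reg (topB N0 K) N a b (N + 1) (sfun N0 K (N + 1) - 4) = 0 := by
    rw [reg_gt (by omega) (by omega)]
    unfold topB
    rw [if_neg (by omega)]
  rw [lemX st G h4 hf1 hf0 hN, reg_gt (by omega) (by omega),
    reg_gt (by omega) (by omega)]
  unfold topB
  rw [if_pos (Or.inl rfl), if_pos (Or.inr rfl), one_mul]

end RegPart

/-! ### Ultrafilter limits -/

section Limit

noncomputable def UF : Ultrafilter ℕ := Ultrafilter.of atTop

open Classical in
noncomputable def ulim (f : ℕ → ZMod 2) : ZMod 2 :=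
  if {N | f N = 1} ∈ UF then 1 else 0

lemma ulim_spec (f : ℕ → ZMod 2) : {N | f N = ulim f} ∈ UF := by
  unfold ulim
  split
  · rename_i h
    exact h
  · rename_i h
    have h2 : {N | f N = 1}ᶜ ∈ UF := Ultrafilter.compl_mem_iff_notMem.mpr h
    refine Filter.mem_of_superset h2 ?_
    intro N hN
    simp only [Set.mem_compl_iff, Set.mem_setOf_eq] at hN ⊢
    rcases two_val (f N) with h0 | h1
    · exact h0
    · exact absurd h1 hN

lemma ulim_eq {f : ℕ → ZMod 2} {c : ZMod 2} (h : {N | f N = c} ∈ UF) : ulim f = c := by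
  have h2 : ({N | f N = ulim f} ∩ {N | f N = c} : Set ℕ) ∈ UF :=
    Filter.inter_mem (ulim_spec f) h
  obtain ⟨N, hN1, hN2⟩ := Filter.nonempty_of_mem h2
  rw [← hN1, hN2]

lemma ulim_eventually {f : ℕ → ZMod 2} {c : ZMod 2}
    (h : ∀ᶠ N in atTop, f N = c) : ulim f = c :=
  ulim_eq (Ultrafilter.of_le atTop h)

lemma mem_UF_of_eventually {s : Set ℕ} (h : ∀ᶠ N in atTop, N ∈ s) : s ∈ UF :=
  Ultrafilter.of_le atTop h

noncomputable def ulimField (top : ℕ → ℕ → ZMod 2) (a b : ℕ → ZMod 2) :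
    ℕ → ℕ → ZMod 2 :=
  fun n m => ulim (fun N => reg top N a b n m)

lemma ulimField_weak {top : ℕ → ℕ → ZMod 2} {a b : ℕ → ZMod 2} :
    IsWeakSol fB gB a b (ulimField top a b) := by
  refine ⟨fun m => ?_, fun n hn => ?_, fun n m hn hm => ?_⟩
  · exact ulim_eventually (Filter.Eventually.of_forall (fun N => reg_row0 m))
  · refine ulim_eventually ?_
    filter_upwards [Filter.eventually_ge_atTop n] with N hN
    exact reg_init hn hN
  · set U := ulimField top a b with hU
    have s0 := ulim_spec (fun N => reg top N a b n m)
    have s1 := ulim_spec (fun N => reg top N a b n (m - 1))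
    have s2 := ulim_spec (fun N => reg top N a b (n + 1) (2 * (m - 1)))
    have s3 := ulim_spec (fun N => reg top N a b (n - 1) ((m - 2) / 2))
    have s4 := ulim_spec (fun N => reg top N a b n (m - 2))
    have s5 : {N : ℕ | n ≤ N} ∈ UF :=
      mem_UF_of_eventually (Filter.eventually_ge_atTop n)
    have hmem : ({N | reg top N a b n m = U n m} ∩
        ({N | reg top N a b n (m - 1) = U n (m - 1)} ∩
        ({N | reg top N a b (n + 1) (2 * (m - 1)) = U (n + 1) (2 * (m - 1))} ∩
        ({N | reg top N a b (n - 1) ((m - 2) / 2) = U (n - 1) ((m - 2) / 2)} ∩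
        ({N | reg top N a b n (m - 2) = U n (m - 2)} ∩ {N : ℕ | n ≤ N})))) : Set ℕ) ∈ UF :=
      Filter.inter_mem s0 (Filter.inter_mem s1 (Filter.inter_mem s2
        (Filter.inter_mem s3 (Filter.inter_mem s4 s5))))
    obtain ⟨N, e0, e1, e2, e3, e4, e5⟩ := Filter.nonempty_of_mem hmem
    simp only [Set.mem_setOf_eq] at e0 e1 e2 e3 e4 e5
    have hid : IdealEq fB gB (reg top N a b) n m := reg_ideal hn e5 hm
    unfold IdealEq at hid ⊢
    rcases Nat.mod_two_eq_zero_or_one m with hpar | hpar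
    · rw [if_neg (by omega)] at hid ⊢
      rw [← e0, ← e1, ← e2, ← e3, ← e4]
      exact hid
    · rw [if_pos hpar] at hid ⊢
      rw [← e0, ← e1, ← e2]
      exact hid

end Limit

/-! ### Master lemma -/

lemma time_le (K N0 n m : ℕ) :
    ((m : ℝ≥0∞) / 2 ^ n ≤ (K : ℝ≥0∞) / 2 ^ N0) ↔ m * 2 ^ N0 ≤ K * 2 ^ n := by
  have h2n0 : ((2 : ℝ≥0∞) ^ n) ≠ 0 := pow_ne_zero _ (by norm_num)
  have h2nt : ((2 : ℝ≥0∞) ^ n) ≠ ⊤ := ENNReal.pow_ne_top ENNReal.ofNat_ne_top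
  have h2N0 : ((2 : ℝ≥0∞) ^ N0) ≠ 0 := pow_ne_zero _ (by norm_num)
  have h2Nt : ((2 : ℝ≥0∞) ^ N0) ≠ ⊤ := ENNReal.pow_ne_top ENNReal.ofNat_ne_top
  rw [ENNReal.div_le_iff h2n0 h2nt]
  have hre : (K : ℝ≥0∞) / 2 ^ N0 * 2 ^ n = ((K : ℝ≥0∞) * 2 ^ n) / 2 ^ N0 := by
    rw [div_eq_mul_inv, div_eq_mul_inv]
    ring
  rw [hre, ENNReal.le_div_iff_mul_le (Or.inl h2N0) (Or.inl h2Nt)]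
  rw [show ((m : ℝ≥0∞) * 2 ^ N0) = ((m * 2 ^ N0 : ℕ) : ℝ≥0∞) by push_cast; ring,
    show ((K : ℝ≥0∞) * 2 ^ n) = ((K * 2 ^ n : ℕ) : ℝ≥0∞) by push_cast; ring,
    Nat.cast_le]

lemma weak_good {a b : ℕ → ZMod 2} {N0 K : ℕ} (st : Setup a b N0 K)
    {u : ℕ → ℕ → ZMod 2} (h : IsWeakSol fB gB a b u) :
    ∀ N', Good a b N0 N' u := fun _ =>
  ⟨h.1, fun n h1 _ => h.2.1 n h1,
    fun n hn => by rw [h.2.1 n (by omega)]; exact st.ha0 (n - 1) (by omega),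
    fun n m h1 _ hm => h.2.2 n m h1 hm⟩

lemma master {a b : ℕ → ZMod 2} {N0 K : ℕ} (st : Setup a b N0 K)
    (hf1 : 1 ≤ N0 → a (N0 - 1) = 1) (hf0 : N0 = 0 → b (K - 2) = 1)
    (T : ℝ≥0∞) (hTval : T = (K : ℝ≥0∞) / 2 ^ N0) :
    (∀ u v : ℕ → ℕ → ZMod 2, IsWeakSol fB gB a b u → IsWeakSol fB gB a b v →
      ∀ n m : ℕ, 1 ≤ n → (m : ℝ≥0∞) / 2 ^ n ≤ T → u n m = v n m) ∧
    (∃ u v : ℕ → ℕ → ZMod 2, IsWeakSol fB gB a b u ∧ IsWeakSol fB gB a b v ∧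
      ∃ n m : ℕ, 1 ≤ n ∧ T < (m : ℝ≥0∞) / 2 ^ n ∧ u n m ≠ v n m) := by
  have part1 : ∀ u v : ℕ → ℕ → ZMod 2, IsWeakSol fB gB a b u → IsWeakSol fB gB a b v →
      ∀ n m : ℕ, 1 ≤ n → (m : ℝ≥0∞) / 2 ^ n ≤ T → u n m = v n m := by
    intro u v hu hv n m h1 hle
    rw [hTval] at hle
    exact uniq st (weak_good st hu) (weak_good st hv) n h1 m ((time_le K N0 n m).mp hle)
  refine ⟨part1, ?_⟩
  set n0 := max 1 N0 + 2 with hn0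
  set m0 := sfun N0 K n0 + 2 with hm0
  set U := ulimField (fun _ _ => (0 : ZMod 2)) a b with hUdef
  set V := ulimField (topB N0 K) a b with hVdef
  have hUw : IsWeakSol fB gB a b U := ulimField_weak
  have hVw : IsWeakSol fB gB a b V := ulimField_weak
  have hU0 : U n0 m0 = 0 := by
    refine ulim_eventually ?_
    filter_upwards [Filter.eventually_ge_atTop n0] with N hN
    exact family_A st hf1 hf0 hN
  have hV1 : V n0 m0 = 1 := by
    refine ulim_eventually ?_
    filter_upwards [Filter.eventually_ge_atTop n0] with N hN
    exact family_B st hf1 hf0 hN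
  have hne : U n0 m0 ≠ V n0 m0 := by
    rw [hU0, hV1]
    decide
  refine ⟨U, V, hUw, hVw, n0, m0, by omega, ?_, hne⟩
  by_contra hc
  push_neg at hc
  exact hne (part1 U V hUw hVw n0 m0 (by omega) hc)


/-- Symbolic model B.  Let `a` have leading initial scale
number `i = n_max(0) < ∞`, and let the blowup time
`T = t_bc + 2` (if `i = 0`) or `T = 2^{1-i} = 2/2^i` (if `i ≥ 1`) be finite.
Then: (i) any two weak solutions coincide at every lattice point `(n, t)` with
`t = m·τₙ ≤ T`; and (ii) there exist two weak solutions differing at some lattice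
point with `t > T`. -/
theorem statement17 (a b : ℕ → ZMod 2) (i : ℕ)
    (hia : ∀ n, i < n → a (n - 1) = 0) (hia' : 1 ≤ i → a (i - 1) = 1)
    (T : ℝ≥0∞) (hT : T = if i = 0 then tbc b + 2 else 2 / 2 ^ i) (hTfin : T ≠ ⊤) :
    (∀ u v : ℕ → ℕ → ZMod 2, IsWeakSol fB gB a b u → IsWeakSol fB gB a b v →
      ∀ n m : ℕ, 1 ≤ n → (m : ℝ≥0∞) / 2 ^ n ≤ T → u n m = v n m) ∧
    (∃ u v : ℕ → ℕ → ZMod 2, IsWeakSol fB gB a b u ∧ IsWeakSol fB gB a b v ∧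
      ∃ n m : ℕ, 1 ≤ n ∧ T < (m : ℝ≥0∞) / 2 ^ n ∧ u n m ≠ v n m) := by
  by_cases hi : i = 0
  · subst hi
    rw [if_pos rfl] at hT
    have hbne : ∃ j, b j ≠ 0 := by
      by_contra hc
      push_neg at hc
      have hset : {s : ℝ≥0∞ | ∀ j : ℕ, (j : ℝ≥0∞) < s → b j = 0} = Set.univ := by
        ext s
        simp [hc]
      have htop : tbc b = ⊤ := by unfold tbc; rw [hset, sSup_univ]
      rw [hT, htop, top_add] at hTfin
      exact hTfin rfl
    set k := Nat.find hbne with hk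
    have hbk : b k ≠ 0 := Nat.find_spec hbne
    have hbk1 : b k = 1 := (two_val (b k)).resolve_left hbk
    have hblt : ∀ j, j < k → b j = 0 := by
      intro j hj
      exact not_not.mp (Nat.find_min hbne hj)
    have htbc : tbc b = (k : ℝ≥0∞) := by
      apply le_antisymm
      · apply sSup_le
        intro s hs
        by_contra hc
        push_neg at hc
        exact hbk (hs k hc)
      · apply le_sSup
        intro j hj
        have hjk : j < k := by exact_mod_cast hj
        exact hblt j hjk
    have st : Setup a b 0 (k + 2) :=
      ⟨by omega, Or.inl rfl, fun j _ => hia (j + 1) (by omega),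
        fun j _ hj => hblt j (by omega)⟩
    have hf1 : 1 ≤ (0 : ℕ) → a (0 - 1) = 1 := fun h => absurd h (by norm_num)
    have hf0 : (0 : ℕ) = 0 → b (k + 2 - 2) = 1 := fun _ => by
      rw [show k + 2 - 2 = k from rfl]
      exact hbk1
    have hTval : T = ((k + 2 : ℕ) : ℝ≥0∞) / 2 ^ (0 : ℕ) := by
      rw [hT, htbc, pow_zero, div_one]
      push_cast
      ring
    exact master st hf1 hf0 T hTval
  · rw [if_neg hi] at hT
    have st : Setup a b i 2 :=
      ⟨le_rfl, Or.inr rfl, fun j hj => hia (j + 1) (by omega),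
        fun j h0 _ => absurd h0 hi⟩
    have hf0 : i = 0 → b (2 - 2) = 1 := fun h => absurd h hi
    have hTval : T = ((2 : ℕ) : ℝ≥0∞) / 2 ^ i := by
      rw [hT]
      norm_num
    exact master st hia' hf0 T hTval

end SSRG
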